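/- Let E_Z > 0 and let l be an integer with 2^l > E_Z. Then the binary entropy of p̃_l = 1/(1 + e^{2^l/E_Z}) satisfies H(p̃_l) ≤ 3·log₂(e)·E_Z·2^{-l} (equivalently, H(p̃_l) ≤ 3·log₂(e)·2^{-l+η} where η = log₂(E_Z)). -/

import Mathlib

/-- The binary entropy function (base 2): `H(p) = -p log₂ p - (1-p) log₂ (1-p)`. -/
noncomputable def binEnt (p : ℝ) : ℝ :=
  -(p * Real.logb 2 p) - (1 - p) * Real.logb 2 (1 - p)

lemma sq_le_exp_of_pos {x : ℝ} (hx : 0 < x) : x ^ 2 ≤ Real.exp x := by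
  have hs : 0 < Real.sqrt x := Real.sqrt_pos.mpr hx
  have h1 : Real.log (Real.sqrt x) ≤ Real.sqrt x - 1 := Real.log_le_sub_one_of_pos hs
  have h2 : Real.log (x ^ 2) = 4 * Real.log (Real.sqrt x) := by
    rw [Real.log_pow, Real.log_sqrt hx.le]; ring
  have h3 : 4 * (Real.sqrt x - 1) ≤ x := by
    nlinarith [sq_nonneg (Real.sqrt x - 2), Real.sq_sqrt hx.le]
  have h4 : Real.log (x ^ 2) ≤ x := by rw [h2]; linarith
  calc x ^ 2 = Real.exp (Real.log (x ^ 2)) := (Real.exp_log (by positivity)).symm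
    _ ≤ Real.exp x := Real.exp_le_exp.mpr h4

/-- Upper bound on the entropy of a high-level binary digit of exponential noise with mean
`E_Z`: if `2^l > E_Z`, then `H(1/(1 + exp (2^l / E_Z))) ≤ 3 log₂(e) E_Z 2^(-l)`. -/
theorem binEnt_noise_upper_bound (EZ : ℝ) (hEZ : 0 < EZ) (l : ℤ) (hl : EZ < (2 : ℝ) ^ l) :
    binEnt (1 / (1 + Real.exp (2 ^ l / EZ))) ≤
      3 * Real.logb 2 (Real.exp 1) * EZ * (2 : ℝ) ^ (-l) := by
  set x : ℝ := 2 ^ l / EZ with hxdef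
  have hx : 1 < x := (one_lt_div hEZ).mpr hl
  have hx0 : 0 < x := by linarith
  have hex : 0 < Real.exp x := Real.exp_pos x
  have hex1 : 1 ≤ Real.exp x := by
    have := Real.add_one_le_exp x; linarith
  have hden : 0 < 1 + Real.exp x := by linarith
  set p : ℝ := 1 / (1 + Real.exp x) with hpdef
  have hp0 : 0 < p := by positivity
  have h1p : 1 - p = 1 / (1 + Real.exp (-x)) := by
    rw [hpdef, Real.exp_neg]
    field_simp
    ring
  have hexn : 0 < Real.exp (-x) := Real.exp_pos _
  have hdenn : 0 < 1 + Real.exp (-x) := by linarith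
  -- logs
  have hlogp : Real.log p = -Real.log (1 + Real.exp x) := by
    rw [hpdef, one_div, Real.log_inv]
  have hlog1p : Real.log (1 - p) = -Real.log (1 + Real.exp (-x)) := by
    rw [h1p, one_div, Real.log_inv]
  set A : ℝ := Real.log (1 + Real.exp x) with hA
  set B : ℝ := Real.log (1 + Real.exp (-x)) with hB
  have hAnn : 0 ≤ A := Real.log_nonneg (by linarith)
  have hBnn : 0 ≤ B := Real.log_nonneg (by linarith)
  have hAle : A ≤ 2 * x := by
    have h2 : (1 : ℝ) + Real.exp x ≤ 2 * Real.exp x := by linarith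
    have := Real.log_le_log hden h2
    rw [Real.log_mul (by norm_num) hex.ne', Real.log_exp] at this
    have hl2 : Real.log 2 ≤ 1 := by
      have := Real.log_le_sub_one_of_pos (by norm_num : (0:ℝ) < 2); linarith
    linarith
  have hple : p ≤ Real.exp (-x) := by
    rw [hpdef, Real.exp_neg, ← one_div]
    exact one_div_le_one_div_of_le hex (by linarith)
  have hBle : B ≤ Real.exp (-x) := by
    have := Real.log_le_sub_one_of_pos hdenn
    linarith
  have h1ple : 1 - p ≤ 1 := by linarith
  have h1pnn : 0 ≤ 1 - p := by
    rw [h1p]; positivity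
  have hsq : x ^ 2 ≤ Real.exp x := sq_le_exp_of_pos hx0
  have hexle : Real.exp (-x) ≤ 1 / x ^ 2 := by
    rw [Real.exp_neg, ← one_div]
    exact one_div_le_one_div_of_le (by positivity) hsq
  have key : -(p * Real.log p) - (1 - p) * Real.log (1 - p) ≤ 3 * (1 / x) := by
    rw [hlogp, hlog1p]
    have e1 : p * A ≤ Real.exp (-x) * (2 * x) :=
      mul_le_mul hple hAle hAnn hexn.le
    have e2 : (1 - p) * B ≤ Real.exp (-x) := by
      calc (1 - p) * B ≤ 1 * B := mul_le_mul_of_nonneg_right h1ple hBnn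
        _ = B := one_mul B
        _ ≤ Real.exp (-x) := hBle
    have e3 : Real.exp (-x) * (2 * x) + Real.exp (-x) ≤ 3 * (x * Real.exp (-x)) := by
      nlinarith
    have e4 : x * Real.exp (-x) ≤ 1 / x := by
      calc x * Real.exp (-x) ≤ x * (1 / x ^ 2) := by
            exact mul_le_mul_of_nonneg_left hexle hx0.le
        _ = 1 / x := by field_simp
    nlinarith
  -- convert to logb
  have hlog2 : 0 < Real.log 2 := Real.log_pos (by norm_num)
  have hEZinv : EZ * (2 : ℝ) ^ (-l) = 1 / x := by
    rw [zpow_neg, hxdef]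
    field_simp
  unfold binEnt Real.logb
  rw [Real.log_exp]
  have : 3 * (1 / Real.log 2) * EZ * (2 : ℝ) ^ (-l)
      = (3 * (1 / x)) / Real.log 2 := by
    rw [mul_assoc, hEZinv]; ring
  rw [this]
  have hL : -(p * (Real.log p / Real.log 2)) - (1 - p) * (Real.log (1 - p) / Real.log 2)
      = (-(p * Real.log p) - (1 - p) * Real.log (1 - p)) / Real.log 2 := by ring
  rw [hL]
  gcongr
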